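/- Let Γ be a *-semigroup acting on a nonempty set X, Z an ordered *-space, H a VE-space over Z, and k : X × X → L*(H) a kernel. If (K, π, V) and (K', π', V') are two minimal Γ-invariant VE-space linearisations of k, then there exists a unitary (VE-space isomorphism) U : K → K' such that U π(ξ) = π'(ξ) U for all ξ ∈ Γ and U V(x) = V'(x) for all x ∈ X. -/
import Mathlib


noncomputable section

/-- An ordered `*`-space structure on a complex vector space `Z` with involution:
a strict cone of selfadjoint elements. -/
structure StarCone (Z : Type*) [AddCommGroup Z] [Module ℂ Z] [StarAddMonoid Z]
    [StarModule ℂ Z] where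
  pos : Set Z
  zero_mem : (0 : Z) ∈ pos
  add_mem : ∀ {x y : Z}, x ∈ pos → y ∈ pos → x + y ∈ pos
  smul_mem : ∀ {r : ℝ}, 0 ≤ r → ∀ {x : Z}, x ∈ pos → (r : ℂ) • x ∈ pos
  strict : ∀ {x : Z}, x ∈ pos → -x ∈ pos → x = 0
  star_mem : ∀ {x : Z}, x ∈ pos → star x = x

/-- The partial order induced by the cone: `a ≤ b` iff `b - a` is positive. -/
def StarCone.le {Z : Type*} [AddCommGroup Z] [Module ℂ Z] [StarAddMonoid Z] [StarModule ℂ Z]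
    (O : StarCone Z) (a b : Z) : Prop :=
  b - a ∈ O.pos

/-- A VE-space gramian on `E` over the ordered `*`-space `(Z, O)`: linear in the second
variable, Hermitian, positive and definite. -/
structure Gramian {Z : Type*} [AddCommGroup Z] [Module ℂ Z] [StarAddMonoid Z] [StarModule ℂ Z]
    (O : StarCone Z) (E : Type*) [AddCommGroup E] [Module ℂ E] where
  inner : E → E → Z
  add_right : ∀ x y z : E, inner x (y + z) = inner x y + inner x z
  smul_right : ∀ (c : ℂ) (x y : E), inner x (c • y) = c • inner x y
  conj_symm : ∀ x y : E, inner x y = star (inner y x)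
  inner_self_mem : ∀ x : E, inner x x ∈ O.pos
  definite : ∀ x : E, inner x x = 0 → x = 0

/-- A linear map `T` between VE-spaces over the same ordered `*`-space is adjointable if
it has an adjoint `S` with `[T e, f] = [e, S f]`. -/
def Adjointable {Z : Type*} [AddCommGroup Z] [Module ℂ Z] [StarAddMonoid Z] [StarModule ℂ Z]
    {O : StarCone Z} {E F : Type*} [AddCommGroup E] [Module ℂ E] [AddCommGroup F] [Module ℂ F]
    (gE : Gramian O E) (gF : Gramian O F) (T : E →ₗ[ℂ] F) : Prop :=
  ∃ S : F →ₗ[ℂ] E, ∀ (e : E) (f : F), gF.inner (T e) f = gE.inner e (S f)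


section GramianAux
variable {Z : Type*} [AddCommGroup Z] [Module ℂ Z] [StarAddMonoid Z] [StarModule ℂ Z]
  {O : StarCone Z} {E : Type*} [AddCommGroup E] [Module ℂ E]

lemma Gramian.zero_right (g : Gramian O E) (x : E) : g.inner x 0 = 0 := by
  have := g.smul_right 0 x 0
  simpa using this

lemma Gramian.zero_left (g : Gramian O E) (x : E) : g.inner 0 x = 0 := by
  rw [g.conj_symm, g.zero_right x, star_zero]

lemma Gramian.add_left (g : Gramian O E) (x y z : E) :
    g.inner (x + y) z = g.inner x z + g.inner y z := by
  rw [g.conj_symm, g.add_right, star_add, ← g.conj_symm, ← g.conj_symm]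

lemma Gramian.smul_left (g : Gramian O E) (c : ℂ) (x y : E) :
    g.inner (c • x) y = (starRingEnd ℂ c) • g.inner x y := by
  rw [g.conj_symm, g.smul_right, star_smul, ← g.conj_symm]
  rfl

end GramianAux

/-- two minimal `Γ`-invariant VE-space linearisations `(K, π, V)` and
`(K', π', V')` of the same kernel `k` are unitarily equivalent: there is a VE-space
isomorphism `U : K → K'` with `U π(ξ) = π'(ξ) U` and `U V(x) = V'(x)`. -/
theorem minimal_invariant_linearisation_unique
    {Z : Type*} [AddCommGroup Z] [Module ℂ Z] [StarAddMonoid Z] [StarModule ℂ Z]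
    (O : StarCone Z)
    {H : Type*} [AddCommGroup H] [Module ℂ H] (gH : Gramian O H)
    {Γ : Type*} [Semigroup Γ] [StarMul Γ]
    {X : Type*} [Nonempty X]
    (act : Γ → X → X)
    (hact : ∀ (ξ η : Γ) (x : X), act ξ (act η x) = act (ξ * η) x)
    (k : X → X → (H →ₗ[ℂ] H))
    {K : Type*} [AddCommGroup K] [Module ℂ K] (gK : Gramian O K)
    {K' : Type*} [AddCommGroup K'] [Module ℂ K'] (gK' : Gramian O K')
    (V : X → (H →ₗ[ℂ] K)) (Vadj : X → (K →ₗ[ℂ] H)) (π : Γ → (K →ₗ[ℂ] K))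
    (V' : X → (H →ₗ[ℂ] K')) (V'adj : X → (K' →ₗ[ℂ] H)) (π' : Γ → (K' →ₗ[ℂ] K'))
    -- `(K, π, V)` is a minimal `Γ`-invariant VE-space linearisation of `k`
    (hV : ∀ (x : X) (e : H) (f : K), gK.inner (V x e) f = gH.inner e (Vadj x f))
    (hk : ∀ (x y : X) (h : H), k x y h = Vadj x (V y h))
    (hπmul : ∀ ξ η : Γ, π (ξ * η) = (π ξ).comp (π η))
    (hπstar : ∀ (ξ : Γ) (f g : K), gK.inner (π ξ f) g = gK.inner f (π (star ξ) g))
    (hπV : ∀ (ξ : Γ) (x : X) (h : H), V (act ξ x) h = π ξ (V x h))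
    (hmin : Submodule.span ℂ {v : K | ∃ (x : X) (h : H), V x h = v} = ⊤)
    -- `(K', π', V')` is a minimal `Γ`-invariant VE-space linearisation of `k`
    (hV' : ∀ (x : X) (e : H) (f : K'), gK'.inner (V' x e) f = gH.inner e (V'adj x f))
    (hk' : ∀ (x y : X) (h : H), k x y h = V'adj x (V' y h))
    (hπ'mul : ∀ ξ η : Γ, π' (ξ * η) = (π' ξ).comp (π' η))
    (hπ'star : ∀ (ξ : Γ) (f g : K'), gK'.inner (π' ξ f) g = gK'.inner f (π' (star ξ) g))
    (hπ'V' : ∀ (ξ : Γ) (x : X) (h : H), V' (act ξ x) h = π' ξ (V' x h))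
    (hmin' : Submodule.span ℂ {v : K' | ∃ (x : X) (h : H), V' x h = v} = ⊤) :
    ∃ U : K →ₗ[ℂ] K', Function.Bijective U ∧
      (∀ f g : K, gK'.inner (U f) (U g) = gK.inner f g) ∧
      (∀ (ξ : Γ) (f : K), U (π ξ f) = π' ξ (U f)) ∧
      (∀ (x : X) (h : H), U (V x h) = V' x h) := by
  -- the subspace of K × K' spanned by pairs (V x h, V' x h)
  set s : Set (K × K') := {p | ∃ (x : X) (h : H), (V x h, V' x h) = p} with hs
  set M : Submodule ℂ (K × K') := Submodule.span ℂ s with hM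
  -- inner products match on generators
  have key : ∀ (x y : X) (h h' : H),
      gK'.inner (V' x h) (V' y h') = gK.inner (V x h) (V y h') := by
    intro x y h h'
    rw [hV', hV, ← hk, ← hk']
  -- inner products match on M
  have inner_eq : ∀ p ∈ M, ∀ q ∈ M, gK'.inner p.2 q.2 = gK.inner p.1 q.1 := by
    intro p hp
    induction hp using Submodule.span_induction with
    | mem p hpmem =>
      obtain ⟨x, h, rfl⟩ := hpmem
      intro q hq
      induction hq using Submodule.span_induction with
      | mem q hqmem =>
        obtain ⟨y, h', rfl⟩ := hqmem
        exact key x y h h'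
      | zero => simp only [Prod.fst_add, Prod.snd_add, Prod.smul_fst, Prod.smul_snd, Prod.fst_zero, Prod.snd_zero]; rw [gK'.zero_right, gK.zero_right]
      | add q r hq hr ihq ihr => simp only [Prod.fst_add, Prod.snd_add, Prod.smul_fst, Prod.smul_snd, Prod.fst_zero, Prod.snd_zero]; rw [gK'.add_right, gK.add_right, ihq, ihr]
      | smul c q hq ihq => simp only [Prod.fst_add, Prod.snd_add, Prod.smul_fst, Prod.smul_snd, Prod.fst_zero, Prod.snd_zero]; rw [gK'.smul_right, gK.smul_right, ihq]
    | zero => intro q hq; simp only [Prod.fst_add, Prod.snd_add, Prod.smul_fst, Prod.smul_snd, Prod.fst_zero, Prod.snd_zero]; rw [gK'.zero_left, gK.zero_left]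
    | add p r hp hr ihp ihr => intro q hq; simp only [Prod.fst_add, Prod.snd_add, Prod.smul_fst, Prod.smul_snd, Prod.fst_zero, Prod.snd_zero]; rw [gK'.add_left, gK.add_left, ihp q hq, ihr q hq]
    | smul c p hp ihp => intro q hq; simp only [Prod.fst_add, Prod.snd_add, Prod.smul_fst, Prod.smul_snd, Prod.fst_zero, Prod.snd_zero]; rw [gK'.smul_left, gK.smul_left, ihp q hq]
  -- first projection restricted to M
  set fstM : M →ₗ[ℂ] K := (LinearMap.fst ℂ K K').comp M.subtype with hfstM
  have fst_image : (LinearMap.fst ℂ K K') '' s = {v : K | ∃ (x : X) (h : H), V x h = v} := by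
    ext v
    constructor
    · rintro ⟨p, ⟨x, h, rfl⟩, rfl⟩; exact ⟨x, h, rfl⟩
    · rintro ⟨x, h, rfl⟩; exact ⟨(V x h, V' x h), ⟨x, h, rfl⟩, rfl⟩
  have fstM_surj : Function.Surjective fstM := by
    intro v
    have hv : v ∈ Submodule.map (LinearMap.fst ℂ K K') M := by
      rw [hM, Submodule.map_span, fst_image, hmin]; trivial
    obtain ⟨p, hp, hpv⟩ := hv
    exact ⟨⟨p, hp⟩, hpv⟩
  have fstM_inj : Function.Injective fstM := by
    rw [injective_iff_map_eq_zero]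
    rintro ⟨p, hp⟩ h0
    have hp1 : p.1 = 0 := h0
    have h2 : gK'.inner p.2 p.2 = 0 := by
      rw [inner_eq p hp p hp, hp1, gK.zero_left]
    have hp2 : p.2 = 0 := gK'.definite _ h2
    ext <;> simp [hp1, hp2]
  set e : M ≃ₗ[ℂ] K := LinearEquiv.ofBijective fstM ⟨fstM_inj, fstM_surj⟩ with he
  set U : K →ₗ[ℂ] K' := ((LinearMap.snd ℂ K K').comp M.subtype).comp (e.symm : K →ₗ[ℂ] M)
    with hU
  have hfst : ∀ f : K, ((e.symm f : M) : K × K').1 = f := by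
    intro f
    have := e.apply_symm_apply f
    exact this
  have hsnd : ∀ f : K, U f = ((e.symm f : M) : K × K').2 := fun f => rfl
  have hUinner : ∀ f g : K, gK'.inner (U f) (U g) = gK.inner f g := by
    intro f g
    rw [hsnd, hsnd]
    have := inner_eq _ (e.symm f).2 _ (e.symm g).2
    rwa [hfst f, hfst g] at this
  have hUV : ∀ (x : X) (h : H), U (V x h) = V' x h := by
    intro x h
    have hmem : (V x h, V' x h) ∈ M := Submodule.subset_span ⟨x, h, rfl⟩
    have : e.symm (V x h) = ⟨(V x h, V' x h), hmem⟩ := by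
      rw [LinearEquiv.symm_apply_eq]
      rfl
    rw [hsnd, this]
  refine ⟨U, ⟨?_, ?_⟩, hUinner, ?_, hUV⟩
  · -- injective
    rw [injective_iff_map_eq_zero]
    intro f hf
    have : gK.inner f f = 0 := by
      rw [← hUinner, hf, gK'.zero_left]
    exact gK.definite f this
  · -- surjective
    rw [← LinearMap.range_eq_top]
    rw [← top_le_iff, ← hmin', Submodule.span_le]
    rintro v ⟨x, h, rfl⟩
    exact ⟨V x h, hUV x h⟩
  · -- intertwining
    intro ξ f
    have : U.comp (π ξ) = (π' ξ).comp U := by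
      apply LinearMap.ext_on hmin
      rintro v ⟨x, h, rfl⟩
      simp only [LinearMap.comp_apply]
      rw [← hπV, hUV, hUV, hπ'V']
    exact LinearMap.congr_fun this f
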